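/- The unit sphere of an infinite-dimensional separable Hilbert space H is contractible. -/

import Mathlib

open scoped InnerProductSpace unitInterval

section Aux

variable {E : Type*} [NormedAddCommGroup E] [InnerProductSpace ℝ E]

/-- Normalize a nonvanishing continuous map to land in the unit sphere. -/
private noncomputable def normMap {X : Type*} [TopologicalSpace X] (c : C(X, E)) (hc : ∀ p, c p ≠ 0) :
    C(X, Metric.sphere (0 : E) 1) where
  toFun p := ⟨‖c p‖⁻¹ • c p, by
    rw [mem_sphere_zero_iff_norm, norm_smul, norm_inv, norm_norm,
      inv_mul_cancel₀ (norm_ne_zero_iff.mpr (hc p))]⟩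
  continuous_toFun := by
    refine Continuous.subtype_mk ?_ _
    exact (c.continuous.norm.inv₀ fun p => norm_ne_zero_iff.mpr (hc p)).smul c.continuous

private lemma normMap_apply {X : Type*} [TopologicalSpace X] (c : C(X, E))
    (hc : ∀ p, c p ≠ 0) (p : X) : (normMap c hc p : E) = ‖c p‖⁻¹ • c p := rfl

private noncomputable def fSmap (S : E →ₗᵢ[ℝ] E) :
    C(Metric.sphere (0 : E) 1, Metric.sphere (0 : E) 1) :=
  ⟨fun x => ⟨S x, by
      rw [mem_sphere_zero_iff_norm, S.norm_map]
      exact mem_sphere_zero_iff_norm.mp x.2⟩,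
    by exact Continuous.subtype_mk (S.continuous.comp continuous_subtype_val) _⟩

private noncomputable def c1map (S : E →ₗᵢ[ℝ] E) : C(I × Metric.sphere (0 : E) 1, E) :=
  ⟨fun p => (1 - (p.1 : ℝ)) • (p.2 : E) + (p.1 : ℝ) • S (p.2 : E), by fun_prop⟩

private noncomputable def c2map (S : E →ₗᵢ[ℝ] E) (v : E) : C(I × Metric.sphere (0 : E) 1, E) :=
  ⟨fun p => (1 - (p.1 : ℝ)) • S (p.2 : E) + (p.1 : ℝ) • v, by fun_prop⟩

/-- The sphere is contractible given a linear isometry `S` and a unit vector `v` orthogonal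
to the range of `S`, such that `S` has no eigenvector with eigenvalue `-1`. -/
private theorem contractible_of_shift (S : E →ₗᵢ[ℝ] E) (v : E) (hv : ‖v‖ = 1)
    (horth : ∀ x : E, ⟪v, S x⟫_ℝ = 0) (hneg : ∀ x : E, S x = -x → x = 0) :
    ContractibleSpace (Metric.sphere (0 : E) 1) := by
  have hmem : ∀ x : Metric.sphere (0 : E) 1, ‖(x : E)‖ = 1 :=
    fun x => mem_sphere_zero_iff_norm.mp x.2
  have hSnorm : ∀ x : Metric.sphere (0 : E) 1, ‖S (x : E)‖ = 1 :=
    fun x => by rw [S.norm_map]; exact hmem x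
  -- the first linear path does not hit the origin
  have hc1 : ∀ p, c1map S p ≠ 0 := by
    rintro ⟨t, x⟩ h
    simp only [c1map, ContinuousMap.coe_mk] at h
    have hx := hmem x
    have hSx := hSnorm x
    have ht : (1 : ℝ) - t = t := by
      have h' : (1 - (t : ℝ)) • (x : E) = -((t : ℝ) • S (x : E)) := by
        linear_combination (norm := module) h
      have h'' := congrArg norm h'
      rw [norm_neg, norm_smul, norm_smul, hx, hSx] at h''
      simpa [abs_of_nonneg (sub_nonneg.mpr t.2.2), abs_of_nonneg t.2.1] using h''
    have ht2 : (t : ℝ) = 1 / 2 := by linarith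
    have hx0 : (x : E) = 0 := by
      refine hneg x ?_
      rw [ht2] at h
      have h2 : (x : E) + S (x : E) = 0 := by
        have h3 := congrArg (fun y : E => (2 : ℝ) • y) h
        simpa using by linear_combination (norm := module) h3
      linear_combination (norm := module) h2
    rw [hx0, norm_zero] at hx
    exact one_ne_zero hx.symm
  -- the second linear path does not hit the origin
  have hc2 : ∀ p, c2map S v p ≠ 0 := by
    rintro ⟨t, x⟩ h
    simp only [c2map, ContinuousMap.coe_mk] at h
    have hSx := hSnorm x
    have hinner := congrArg (fun y : E => ⟪v, y⟫_ℝ) h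
    simp only [inner_add_right, inner_smul_right, horth, inner_zero_right, mul_zero,
      real_inner_self_eq_norm_sq, hv, zero_add] at hinner
    have ht0 : (t : ℝ) = 0 := by
      have := hinner
      norm_num at this
      linarith [this]
    rw [ht0] at h
    simp only [sub_zero, one_smul, zero_smul, add_zero] at h
    rw [h, norm_zero] at hSx
    exact one_ne_zero hSx.symm
  -- assemble the homotopies
  refine (contractible_iff_id_nullhomotopic _).mpr
    ⟨⟨v, mem_sphere_zero_iff_norm.mpr hv⟩, ?_⟩
  have hhom1 : (ContinuousMap.id (Metric.sphere (0 : E) 1)).Homotopic (fSmap S) := by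
    refine ⟨{ toContinuousMap := normMap (c1map S) hc1, map_zero_left := ?_,
              map_one_left := ?_ }⟩
    · intro x
      refine Subtype.ext ?_
      show ‖c1map S (0, x)‖⁻¹ • c1map S (0, x) = _
      simp [c1map, hmem x]
    · intro x
      refine Subtype.ext ?_
      show ‖c1map S (1, x)‖⁻¹ • c1map S (1, x) = _
      simp [c1map, fSmap, hSnorm x]
  have hhom2 : (fSmap S).Homotopic
      (ContinuousMap.const _ ⟨v, mem_sphere_zero_iff_norm.mpr hv⟩) := by
    refine ⟨{ toContinuousMap := normMap (c2map S v) hc2, map_zero_left := ?_,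
              map_one_left := ?_ }⟩
    · intro x
      refine Subtype.ext ?_
      show ‖c2map S v (0, x)‖⁻¹ • c2map S v (0, x) = _
      simp [c2map, fSmap, hSnorm x]
    · intro x
      refine Subtype.ext ?_
      show ‖c2map S v (1, x)‖⁻¹ • c2map S v (1, x) = _
      simp [c2map, hv]
  exact hhom1.trans hhom2

end Aux

/-- The unit sphere of an infinite-dimensional separable (real) Hilbert space is
contractible. -/
theorem stmt5 (H : Type*) [NormedAddCommGroup H] [InnerProductSpace ℝ H]
    [CompleteSpace H] [TopologicalSpace.SeparableSpace H]
    (hinf : ¬ FiniteDimensional ℝ H) :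
    ContractibleSpace (Metric.sphere (0 : H) 1) := by
  classical
  -- get a Hilbert basis indexed by `ℕ`
  obtain ⟨w, b0, hb0⟩ := exists_hilbertBasis ℝ H
  have hw_orth : Orthonormal ℝ ((↑) : w → H) := by rw [← hb0]; exact b0.orthonormal
  -- `w` is countable
  have hw_count : Countable w := by
    refine Pairwise.countable_of_isOpen_disjoint
      (s := fun u : w => Metric.ball (u : H) 2⁻¹) ?_ (fun _ => Metric.isOpen_ball)
      (fun u => Metric.nonempty_ball.mpr (by norm_num))
    intro u u' huu'
    refine Metric.ball_disjoint_ball ?_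
    rw [dist_eq_norm]
    have h1 : ‖(u : H) - (u' : H)‖ ^ 2 = 2 := by
      rw [norm_sub_sq_real, hw_orth.1 u, hw_orth.2 huu', hw_orth.1 u']
      norm_num
    nlinarith [norm_nonneg ((u : H) - (u' : H))]
  -- `w` is infinite
  have hw_inf : Infinite w := by
    rw [Set.infinite_coe_iff]
    intro hfin
    apply hinf
    have hspan : (Submodule.span ℝ w).topologicalClosure = ⊤ := by
      have := b0.dense_span
      rwa [hb0, Subtype.range_coe] at this
    have hfd : FiniteDimensional ℝ (Submodule.span ℝ w) :=
      FiniteDimensional.span_of_finite ℝ hfin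
    rw [(Submodule.span ℝ w).closed_of_finiteDimensional.submodule_topologicalClosure_eq]
      at hspan
    exact Module.Finite.equiv (LinearEquiv.ofTop _ hspan)
  obtain ⟨den⟩ := nonempty_denumerable w
  let e : ℕ ≃ w := (Denumerable.eqv w).symm
  -- reindexed Hilbert basis
  let bv : ℕ → H := fun n => ((e n : w) : H)
  have hbv_orth : Orthonormal ℝ bv := hw_orth.comp e e.injective
  have hbv_range : Set.range bv = w := by
    have : Set.range bv = ((↑) : w → H) '' Set.range e := by
      rw [← Set.range_comp]; rfl
    rw [this, e.range_eq_univ, Set.image_univ, Subtype.range_coe]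
  have hbv_sp : ⊤ ≤ (Submodule.span ℝ (Set.range bv)).topologicalClosure := by
    rw [hbv_range]
    have := b0.dense_span
    rw [hb0, Subtype.range_coe] at this
    rw [this]
  let b : HilbertBasis ℕ ℝ H := HilbertBasis.mk hbv_orth hbv_sp
  -- the shifted orthonormal family
  have hu : Orthonormal ℝ (fun n => b (n + 1)) :=
    b.orthonormal.comp (· + 1) (add_left_injective 1)
  -- the shift operator
  let S : H →ₗᵢ[ℝ] H :=
    hu.orthogonalFamily.linearIsometry.comp b.repr.toLinearIsometry
  have hS_sum : ∀ x : H, HasSum (fun n => b.repr x n • b (n + 1)) (S x) := by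
    intro x
    have := hu.orthogonalFamily.hasSum_linearIsometry (b.repr x)
    show HasSum _ (hu.orthogonalFamily.linearIsometry (b.repr x))
    simpa [LinearIsometry.toSpanSingleton_apply] using this
  -- coordinates of `S x`
  have hS_coord0 : ∀ x : H, ⟪b 0, S x⟫_ℝ = 0 := by
    intro x
    have h := (hS_sum x).mapL (innerSL ℝ (b 0))
    have h0 : (fun n => (innerSL ℝ (b 0)) (b.repr x n • b (n + 1))) = fun _ => (0 : ℝ) := by
      funext n
      simp only [innerSL_apply_apply, inner_smul_right]
      rw [b.orthonormal.2 (by omega : (0 : ℕ) ≠ n + 1)]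
      ring
    rw [h0] at h
    exact (hasSum_zero.unique h).symm
  have hS_coordS : ∀ (x : H) (k : ℕ), ⟪b (k + 1), S x⟫_ℝ = b.repr x k := by
    intro x k
    have h := (hS_sum x).mapL (innerSL ℝ (b (k + 1)))
    have h0 : (fun n => (innerSL ℝ (b (k + 1))) (b.repr x n • b (n + 1))) =
        fun n => if n = k then b.repr x k else 0 := by
      funext n
      simp only [innerSL_apply_apply, inner_smul_right]
      by_cases hnk : n = k
      · subst hnk
        rw [orthonormal_iff_ite.mp b.orthonormal]
        simp
      · rw [b.orthonormal.2 (by omega : k + 1 ≠ n + 1)]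
        simp [hnk]
    rw [h0] at h
    exact ((hasSum_ite_eq k (b.repr x k)).unique h).symm
  -- `S` has no eigenvector with eigenvalue `-1`
  have hneg : ∀ x : H, S x = -x → x = 0 := by
    intro x hSx
    have hcoord : ∀ n, b.repr x n = 0 := by
      have key : ∀ n, ⟪b n, x⟫_ℝ = b.repr x n := fun n => (b.repr_apply_apply x n).symm
      have h0 : b.repr x 0 = 0 := by
        have := hS_coord0 x
        rw [hSx, inner_neg_right, key 0] at this
        linarith
      have hstep : ∀ k, b.repr x (k + 1) = -(b.repr x k) := by
        intro k
        have := hS_coordS x k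
        rw [hSx, inner_neg_right, key (k + 1)] at this
        linarith
      intro n
      induction n with
      | zero => exact h0
      | succ k ih => rw [hstep k, ih, neg_zero]
    have hsum := b.hasSum_repr x
    have : (fun n => b.repr x n • b n) = fun _ => (0 : H) := by
      funext n; rw [hcoord n, zero_smul]
    rw [this] at hsum
    exact (hasSum_zero.unique hsum).symm
  exact contractible_of_shift S (b 0) (b.orthonormal.1 0)
    (fun x => hS_coord0 x) hneg
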